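/- Let T be a proper infinite rooted tree with constant weight σ ≡ 1. Then Mod_{1,1}(Γ_∞) = |S_1|, the number of edges in the first shell. -/

import Mathlib

open scoped ENNReal NNReal

/-- A proper infinite rooted tree, modeled as a prefix-closed set of finite lists of
naturals in which every node has at least one and finitely many children. -/
structure PTree where
  mem : List ℕ → Prop
  root_mem : mem []
  prefix_closed : ∀ ⦃l₁ l₂ : List ℕ⦄, l₁ <+: l₂ → mem l₂ → mem l₁
  child_exists : ∀ ⦃l⦄, mem l → ∃ a, mem (l ++ [a])
  finite_children : ∀ ⦃l⦄, mem l → {a : ℕ | mem (l ++ [a])}.Finite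

/-- The initial segment of length `n` of `f : ℕ → ℕ`, as a list. -/
def seg (f : ℕ → ℕ) (n : ℕ) : List ℕ := (List.range n).map f

namespace PTree

variable (T : PTree)

/-- The edges of the tree: the nonempty lists in `T`. -/
def Edge : Type := {e : List ℕ // T.mem e ∧ e ≠ []}

/-- The family `Γ_∞` of infinite descending paths: functions all of whose
finite initial segments lie in `T`. -/
def GammaInf : Set (ℕ → ℕ) := {f | ∀ n, T.mem (seg f n)}

/-- `ρ`-length of the infinite descending path determined by `f`: the sum of `ρ`
over the nonempty initial segments of `f`. -/
noncomputable def lenInf (ρ : List ℕ → ℝ≥0) (f : ℕ → ℕ) : ℝ≥0∞ :=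
  ∑' n : ℕ, (ρ (seg f (n + 1)) : ℝ≥0∞)

/-- `ρ`-length of the finite descending path `γ_e` consisting of the nonempty
prefixes of the edge `e`. -/
noncomputable def lenFin (ρ : List ℕ → ℝ≥0) (e : List ℕ) : ℝ≥0∞ :=
  ∑ k ∈ Finset.range e.length, (ρ (e.take (k + 1)) : ℝ≥0∞)

/-- Admissible densities for the family `Γ_n` (identified with the shell `S_n`). -/
def AdmFin (n : ℕ) : Set (List ℕ → ℝ≥0) :=
  {ρ | ∀ e : List ℕ, T.mem e → e.length = n → 1 ≤ lenFin ρ e}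

/-- Admissible densities for the family `Γ_∞`. -/
def AdmInf : Set (List ℕ → ℝ≥0) :=
  {ρ | ∀ f ∈ T.GammaInf, 1 ≤ lenInf ρ f}

/-- The `p`-energy of a density `ρ` with respect to the weight `σ`. -/
noncomputable def energy (p : ℝ) (σ ρ : List ℕ → ℝ≥0) : ℝ≥0∞ :=
  ∑' e : T.Edge, (σ e.1 : ℝ≥0∞) * (ρ e.1 : ℝ≥0∞) ^ p

/-- The `∞`-energy of a density `ρ` with respect to the weight `σ`. -/
noncomputable def energyTop (σ ρ : List ℕ → ℝ≥0) : ℝ≥0∞ :=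
  ⨆ e : T.Edge, (σ e.1 : ℝ≥0∞) * (ρ e.1 : ℝ≥0∞)

/-- The `p`-modulus of the family `Γ_n`. -/
noncomputable def ModFin (p : ℝ) (σ : List ℕ → ℝ≥0) (n : ℕ) : ℝ≥0∞ :=
  ⨅ ρ ∈ T.AdmFin n, T.energy p σ ρ

/-- The `p`-modulus of the family `Γ_∞`. -/
noncomputable def ModInf (p : ℝ) (σ : List ℕ → ℝ≥0) : ℝ≥0∞ :=
  ⨅ ρ ∈ T.AdmInf, T.energy p σ ρ

/-- The `∞`-modulus of the family `Γ_∞`. -/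
noncomputable def ModTop (σ : List ℕ → ℝ≥0) : ℝ≥0∞ :=
  ⨅ ρ ∈ T.AdmInf, T.energyTop σ ρ

end PTree

section Aux

lemma seg_length' (f : ℕ → ℕ) (n : ℕ) : (seg f n).length = n := by simp [seg]

lemma seg_succ' (f : ℕ → ℕ) (n : ℕ) : seg f (n + 1) = seg f n ++ [f n] := by
  simp [seg, List.range_succ]

lemma seg_prefix' (f : ℕ → ℕ) {m n : ℕ} (h : m ≤ n) : seg f m <+: seg f n := by
  induction n with
  | zero => simpa using (Nat.le_zero.mp h) ▸ List.prefix_refl _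
  | succ n ih =>
    rcases Nat.lt_or_ge m (n + 1) with h' | h'
    · exact (ih (Nat.lt_succ_iff.mp h')).trans (by rw [seg_succ']; exact List.prefix_append _ _)
    · have : m = n + 1 := le_antisymm h h'
      subst this; exact List.prefix_refl _

lemma seg_getElem (f : ℕ → ℕ) (n i : ℕ) (hi : i < (seg f n).length) :
    (seg f n)[i] = f i := by
  simp [seg]

/-- chosen extension of a node by n more generations -/
noncomputable def extPath (T : PTree) (l : List ℕ) (hl : T.mem l) :
    ℕ → {l' : List ℕ // T.mem l'}
  | 0 => ⟨l, hl⟩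
  | n + 1 =>
    let p := extPath T l hl n
    ⟨p.1 ++ [(T.child_exists p.2).choose], (T.child_exists p.2).choose_spec⟩

lemma extPath_length (T : PTree) (l : List ℕ) (hl : T.mem l) (n : ℕ) :
    (extPath T l hl n).1.length = l.length + n := by
  induction n with
  | zero => rfl
  | succ n ih => simp [extPath, ih]; omega

lemma extPath_prefix (T : PTree) (l : List ℕ) (hl : T.mem l) {m n : ℕ} (h : m ≤ n) :
    (extPath T l hl m).1 <+: (extPath T l hl n).1 := by
  induction n with
  | zero => simpa using (Nat.le_zero.mp h) ▸ List.prefix_refl _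
  | succ n ih =>
    rcases Nat.lt_or_ge m (n + 1) with h' | h'
    · exact (ih (Nat.lt_succ_iff.mp h')).trans (by exact List.prefix_append _ _)
    · have : m = n + 1 := le_antisymm h h'
      subst this; exact List.prefix_refl _

/-- every node of a proper tree lies on an infinite descending path -/
lemma exists_path (T : PTree) {l : List ℕ} (hl : T.mem l) :
    ∃ f ∈ T.GammaInf, seg f l.length = l := by
  set A := extPath T l hl with hA
  set f : ℕ → ℕ := fun n => (A (n + 1)).1.getD n 0 with hf
  have hlen : ∀ n, (A n).1.length = l.length + n := extPath_length T l hl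
  have key : ∀ m, seg f (l.length + m) = (A m).1 := by
    intro m
    induction m with
    | zero =>
      apply List.ext_getElem
      · simp [seg_length', hlen]
      · intro i h1 h2
        rw [seg_getElem]
        have hi : i < l.length := by simpa [hlen] using h2
        have hpre : (A 0).1 <+: (A (i + 1)).1 := extPath_prefix T l hl (Nat.zero_le _)
        have : (A (i+1)).1.getD i 0 = (A 0).1[i]'(by rw [hlen]; omega) := by
          rw [List.getD_eq_getElem _ _ (by simp [hlen]; omega), hpre.getElem]
        simpa [hf] using this
    | succ m ih =>
      have h1 : seg f (l.length + (m + 1)) = seg f (l.length + m) ++ [f (l.length + m)] :=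
        seg_succ' f (l.length + m)
      rw [h1, ih]
      have hstep : (A (m + 1)).1 = (A m).1 ++ [(T.child_exists (A m).2).choose] := rfl
      have hval : f (l.length + m) = (T.child_exists (A m).2).choose := by
        have hpre : (A (m + 1)).1 <+: (A (l.length + m + 1)).1 :=
          extPath_prefix T l hl (by omega)
        have hidx : l.length + m < (A (m + 1)).1.length := by simp [hlen]
        have heq : f (l.length + m) = (A (l.length + m + 1)).1.getD (l.length + m) 0 := rfl
        rw [heq, List.getD_eq_getElem _ _ (by rw [hlen]; omega)]
        rw [← hpre.getElem hidx]
        have h3 := List.getElem_of_eq hstep hidx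
        rw [h3]
        exact List.getElem_concat_length (by rw [hlen]) _
      rw [hval, ← hstep]
  refine ⟨f, ?_, by simpa [hA, extPath] using key 0⟩
  intro n
  have hpre : seg f n <+: seg f (l.length + n) := seg_prefix' f (by omega)
  rw [key n] at hpre
  exact T.prefix_closed hpre (A n).2

lemma tsum_one_nat_card (ι : Type*) [Finite ι] :
    ∑' _ : ι, (1 : ℝ≥0∞) = (Nat.card ι : ℝ≥0∞) := by
  haveI : Fintype ι := Fintype.ofFinite ι
  simp [tsum_fintype, Nat.card_eq_fintype_card]

end Aux

/-- for the constant weight `σ ≡ 1`, the `1`-modulus of `Γ_∞`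
equals the number of edges in the first shell `S_1`. -/
theorem stmt11 (T : PTree) :
    T.ModInf 1 (fun _ => 1) =
      (Nat.card {e : List ℕ // T.mem e ∧ e.length = 1} : ℝ≥0∞) := by
  classical
  set S1 := {e : List ℕ // T.mem e ∧ e.length = 1} with hS1
  -- S1 is finite
  haveI hfinS1 : Finite S1 := by
    have hfin : {a : ℕ | T.mem ([] ++ [a])}.Finite := T.finite_children T.root_mem
    haveI := hfin.to_subtype
    refine Finite.of_injective (fun e : S1 => (⟨e.1.headI, ?_⟩ : {a : ℕ | T.mem ([] ++ [a])})) ?_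
    · obtain ⟨a, ha⟩ := List.length_eq_one_iff.mp e.2.2
      simpa [ha] using e.2.1
    · intro e₁ e₂ h
      obtain ⟨a, ha⟩ := List.length_eq_one_iff.mp e₁.2.2
      obtain ⟨b, hb⟩ := List.length_eq_one_iff.mp e₂.2.2
      apply Subtype.ext
      have := congrArg Subtype.val h
      simp only [ha, hb, List.headI] at this ⊢
      rw [this]
  -- energy at p = 1 with weight 1 is just the tsum of ρ
  have henergy : ∀ ρ : List ℕ → ℝ≥0,
      T.energy 1 (fun _ => 1) ρ = ∑' e : T.Edge, (ρ e.1 : ℝ≥0∞) := by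
    intro ρ
    unfold PTree.energy
    simp [ENNReal.rpow_one]
  apply le_antisymm
  · -- upper bound via the indicator density of the first shell
    set ρ0 : List ℕ → ℝ≥0 := fun l => if l.length = 1 then 1 else 0 with hρ0
    have hadm : ρ0 ∈ T.AdmInf := by
      intro f hf
      have h0 : (ρ0 (seg f (0 + 1)) : ℝ≥0∞) = 1 := by
        simp [hρ0, seg_length']
      calc (1 : ℝ≥0∞) = (ρ0 (seg f (0 + 1)) : ℝ≥0∞) := h0.symm
        _ ≤ PTree.lenInf ρ0 f := ENNReal.le_tsum 0
    refine le_trans (iInf₂_le ρ0 hadm) ?_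
    rw [henergy]
    have hind : ∀ e : T.Edge, (ρ0 e.1 : ℝ≥0∞) =
        Set.indicator {x : T.Edge | x.1.length = 1} (fun _ => (1 : ℝ≥0∞)) e := by
      intro e
      by_cases h : e.1.length = 1 <;> simp [hρ0, h, Set.indicator]
    calc ∑' e : T.Edge, (ρ0 e.1 : ℝ≥0∞)
        = ∑' e : T.Edge, Set.indicator {x : T.Edge | x.1.length = 1}
            (fun _ => (1 : ℝ≥0∞)) e := by exact tsum_congr hind
      _ = ∑' _ : {x : T.Edge | x.1.length = 1}, (1 : ℝ≥0∞) :=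
          (tsum_subtype {x : T.Edge | x.1.length = 1} (fun _ => (1 : ℝ≥0∞))).symm
      _ = (Nat.card {x : T.Edge | x.1.length = 1} : ℝ≥0∞) := by
          haveI : Finite {x : T.Edge | x.1.length = 1} := by
            refine Finite.of_injective (fun x : {x : T.Edge | x.1.length = 1} =>
              (⟨x.1.1, x.1.2.1, x.2⟩ : S1)) ?_
            intro x y h
            apply Subtype.ext
            apply Subtype.ext
            exact congrArg (fun z : S1 => z.1) h
          exact tsum_one_nat_card _
      _ ≤ (Nat.card S1 : ℝ≥0∞) := by
          apply Nat.cast_le.mpr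
          apply le_of_eq
          apply Nat.card_congr
          exact ⟨fun x => ⟨x.1.1, x.1.2.1, x.2⟩,
            fun y => ⟨⟨y.1, y.2.1, by
              obtain ⟨a, ha⟩ := List.length_eq_one_iff.mp y.2.2; simp [ha]⟩, y.2.2⟩,
            fun x => by ext; rfl, fun y => by ext; rfl⟩
  · -- lower bound
    refine le_iInf₂ fun ρ hρ => ?_
    -- choose for each first-shell edge an infinite path through it
    have hch : ∀ a : S1, ∃ f ∈ T.GammaInf, seg f 1 = a.1 := by
      intro a
      obtain ⟨f, hf, hseg⟩ := exists_path T a.2.1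
      exact ⟨f, hf, by rwa [a.2.2] at hseg⟩
    choose F hF hFseg using hch
    set φ : S1 × ℕ → T.Edge := fun x =>
      ⟨seg (F x.1) (x.2 + 1), (hF x.1) (x.2 + 1), by
        intro h
        have := congrArg List.length h
        simp [seg_length'] at this⟩ with hφ
    have hφinj : Function.Injective φ := by
      rintro ⟨a, n⟩ ⟨b, m⟩ h
      have hval : seg (F a) (n + 1) = seg (F b) (m + 1) := congrArg Subtype.val h
      have hlen : n = m := by
        have := congrArg List.length hval
        simpa [seg_length'] using this
      have hhead : a = b := by
        apply Subtype.ext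
        have h1 : (seg (F a) (n + 1)).take 1 = seg (F a) 1 := by
          simp only [seg, ← List.map_take, List.take_range]; norm_num
        have h2 : (seg (F b) (m + 1)).take 1 = seg (F b) 1 := by
          simp only [seg, ← List.map_take, List.take_range]; norm_num
        rw [← hFseg a, ← hFseg b, ← h1, ← h2, hval]
      exact Prod.ext hhead (by simpa using hlen)
    rw [henergy]
    calc (Nat.card S1 : ℝ≥0∞) = ∑' _ : S1, (1 : ℝ≥0∞) := (tsum_one_nat_card S1).symm
      _ ≤ ∑' a : S1, PTree.lenInf ρ (F a) := ENNReal.tsum_le_tsum fun a => hρ (F a) (hF a)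
      _ = ∑' x : S1 × ℕ, (ρ (seg (F x.1) (x.2 + 1)) : ℝ≥0∞) :=
          (ENNReal.tsum_prod (f := fun a n => (ρ (seg (F a) (n + 1)) : ℝ≥0∞))).symm
      _ ≤ ∑' e : T.Edge, (ρ e.1 : ℝ≥0∞) :=
          ENNReal.tsum_comp_le_tsum_of_injective hφinj (fun e => (ρ e.1 : ℝ≥0∞))
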